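/- Let q be a prime power and a ∈ F_{q²}*. If f(x) = a·x + x^(3q-2) is a permutation polynomial (i.e., bijection) of F_{q²}, then q ≡ 2 (mod 3), equivalently 3 divides q+1. -/

import Mathlib

open Finset

/-- Sum of `x ^ n` over a finite field, for `n ≠ 0`. -/
lemma aux_sum_pow (K : Type*) [Field K] [Fintype K] [DecidableEq K] (n : ℕ) (hn : n ≠ 0) :
    ∑ x : K, x ^ n = if Fintype.card K - 1 ∣ n then -1 else 0 := by
  classical
  let φ : Kˣ ↪ K := ⟨fun x ↦ x, fun _ _ h => Units.ext h⟩
  have huniv : Finset.univ.map φ = Finset.univ \ {0} := by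
    ext x
    simp only [Finset.mem_map, Finset.mem_univ, Function.Embedding.coeFn_mk, true_and,
      Finset.mem_sdiff, Finset.mem_singleton, φ]
    exact isUnit_iff_ne_zero
  calc
    ∑ x : K, x ^ n = ∑ x ∈ Finset.univ \ {(0 : K)}, x ^ n := by
      rw [← Finset.sum_sdiff ({0} : Finset K).subset_univ, Finset.sum_singleton,
        zero_pow hn, add_zero]
    _ = ∑ x : Kˣ, ((x : K) ^ n) := by simp [φ, ← huniv, Finset.univ.sum_map φ]; rfl
    _ = _ := FiniteField.sum_pow_units K n

/-- In characteristic `p`, the binomial coefficients of `p ^ e - 1` are `(-1) ^ k`. -/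
lemma aux_choose (p e : ℕ) (hp : p.Prime) (K : Type*) [Field K] [CharP K p] :
    ∀ k, k ≤ p ^ e - 1 → (((p ^ e - 1).choose k : K)) = (-1) ^ k := by
  have hq1 : 1 ≤ p ^ e := Nat.one_le_pow _ _ hp.pos
  intro k
  induction k with
  | zero => simp
  | succ k ih =>
    intro hk
    have hk' : k ≤ p ^ e - 1 := by omega
    have hpascal : (p ^ e).choose (k + 1) = (p ^ e - 1).choose k + (p ^ e - 1).choose (k + 1) := by
      conv_lhs => rw [show p ^ e = (p ^ e - 1) + 1 by omega]
      exact Nat.choose_succ_succ' _ _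
    have h0 : (((p ^ e).choose (k + 1) : K)) = 0 := by
      rw [CharP.cast_eq_zero_iff K p]
      exact Nat.Prime.dvd_choose_pow hp (by omega) (by omega)
    have hih := ih hk'
    have hc : ((p ^ e - 1).choose k : K) + ((p ^ e - 1).choose (k + 1) : K) = 0 := by
      rw [← Nat.cast_add, ← hpascal]; exact h0
    have : ((p ^ e - 1).choose (k + 1) : K) = -(-1) ^ k := by
      linear_combination hc - hih
    rw [this, pow_succ]; ring

theorem perm_implies_three_dvd_q_add_one
    (q : ℕ) (hq : IsPrimePow q)
    (F : Type*) [Field F] [Fintype F] (hF : Fintype.card F = q ^ 2)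
    (a : F) (ha : a ≠ 0)
    (hperm : Function.Bijective (fun x : F => a * x + x ^ (3 * q - 2))) :
    3 ∣ q + 1 := by
  classical
  by_contra h3
  have hq2 : 2 ≤ q := hq.two_le
  obtain ⟨p, e, hp, he, hpe⟩ := hq
  have hpp : p.Prime := Nat.prime_iff.mpr hp
  -- characteristic of F is p
  have hcharF : CharP F p := by
    obtain ⟨n, hpc, hcard⟩ := FiniteField.card F (ringChar F)
    have hdvd : ringChar F ∣ p := by
      have h1 : ringChar F ∣ Fintype.card F := by
        rw [hcard]; exact dvd_pow_self _ (by positivity)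
      rw [hF, ← hpe, ← pow_mul] at h1
      exact hpc.dvd_of_dvd_pow h1
    have : ringChar F = p := (Nat.prime_dvd_prime_iff_eq hpc hpp).mp hdvd
    rw [← this]; exact ringChar.charP F
  -- the distinguished index
  have hkey : ∃ j0, j0 ≤ q - 1 ∧ ∀ j ≤ q - 1, ((q + 1) ∣ 1 + 3 * j ↔ j = j0) := by
    have hmod : q % 3 = 0 ∨ q % 3 = 1 := by omega
    have huniq : ∀ j ≤ q - 1, (q + 1) ∣ 1 + 3 * j → 1 + 3 * j = q + 1 ∨ 1 + 3 * j = 2 * (q + 1) := by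
      intro j hj ⟨c, hc⟩
      have hub : 1 + 3 * j < (q + 1) * 3 := by omega
      rw [hc] at hub
      have hc3 : c < 3 := lt_of_mul_lt_mul_left hub (by omega)
      interval_cases c <;> omega
    rcases hmod with h | h
    · refine ⟨q / 3, by omega, fun j hj => ⟨fun hd => ?_, fun hd => ⟨1, by omega⟩⟩⟩
      rcases huniq j hj hd with h1 | h1 <;> omega
    · refine ⟨(2 * q + 1) / 3, by omega, fun j hj => ⟨fun hd => ?_, fun hd => ⟨2, by omega⟩⟩⟩
      rcases huniq j hj hd with h1 | h1 <;> omega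
  obtain ⟨j0, hj0le, huniq⟩ := hkey
  set k0 := q - 1 - j0 with hk0
  have hk0q : k0 < q := by omega
  -- factorization of q^2 - 1
  have hfactor : q ^ 2 - 1 = (q - 1) * (q + 1) := by
    obtain ⟨m, rfl⟩ : ∃ m, q = m + 2 := ⟨q - 2, by omega⟩
    have h1 : m + 2 - 1 = m + 1 := by omega
    have h2 : (m + 2) ^ 2 - 1 = m ^ 2 + 4 * m + 3 := by ring_nf; omega
    rw [h1, h2]; ring
  -- exponent computation
  have hE : ∀ k < q, k + (3 * q - 2) * (q - 1 - k) = (q - 1) * (1 + 3 * (q - 1 - k)) := by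
    intro k hk
    have h32 : 3 * q - 2 = 3 * (q - 1 - k) + 3 * k + 1 := by omega
    rw [h32]
    set j := q - 1 - k with hj
    rw [show q - 1 = k + j by omega]
    ring
  have hdvdiff : ∀ k < q, ((q ^ 2 - 1) ∣ (k + (3 * q - 2) * (q - 1 - k)) ↔ k = k0) := by
    intro k hk
    rw [hE k hk, hfactor, Nat.mul_dvd_mul_iff_left (show 0 < q - 1 by omega),
      huniq (q - 1 - k) (by omega)]
    constructor <;> intro h <;> omega
  -- the power-sum is zero since f is a bijection
  have hsum0 : ∑ x : F, (a * x + x ^ (3 * q - 2)) ^ (q - 1) = 0 := by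
    rw [Fintype.sum_bijective _ hperm _ (fun y : F => y ^ (q - 1)) (fun x => rfl)]
    apply FiniteField.sum_pow_lt_card_sub_one
    rw [hF]
    have : q < q ^ 2 := by nlinarith
    omega
  -- binomial expansion
  have hexp : ∀ x : F, (a * x + x ^ (3 * q - 2)) ^ (q - 1)
      = ∑ k ∈ Finset.range q, ((q - 1).choose k : F) * a ^ k * x ^ (k + (3 * q - 2) * (q - 1 - k)) := by
    intro x
    rw [add_pow, show q - 1 + 1 = q by omega]
    refine Finset.sum_congr rfl fun k hk => ?_
    ring
  have hswap : ∑ x : F, (a * x + x ^ (3 * q - 2)) ^ (q - 1)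
      = ∑ k ∈ Finset.range q, ((q - 1).choose k : F) * a ^ k
          * ∑ x : F, x ^ (k + (3 * q - 2) * (q - 1 - k)) := by
    simp_rw [hexp, Finset.mul_sum]
    rw [Finset.sum_comm]
  have hinner : ∀ k ∈ Finset.range q,
      ∑ x : F, x ^ (k + (3 * q - 2) * (q - 1 - k))
        = if (q ^ 2 - 1) ∣ (k + (3 * q - 2) * (q - 1 - k)) then (-1 : F) else 0 := by
    intro k hk
    rw [aux_sum_pow F _ ?_, hF]
    rw [hE k (Finset.mem_range.mp hk)]
    exact Nat.mul_ne_zero (by omega) (by omega)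
  have hfinal : ∑ k ∈ Finset.range q, ((q - 1).choose k : F) * a ^ k
          * ∑ x : F, x ^ (k + (3 * q - 2) * (q - 1 - k))
      = -(((q - 1).choose k0 : F) * a ^ k0) := by
    rw [show (∑ k ∈ Finset.range q, ((q - 1).choose k : F) * a ^ k
          * ∑ x : F, x ^ (k + (3 * q - 2) * (q - 1 - k)))
        = ∑ k ∈ Finset.range q, ((q - 1).choose k : F) * a ^ k
          * (if (q ^ 2 - 1) ∣ (k + (3 * q - 2) * (q - 1 - k)) then (-1 : F) else 0) from
      Finset.sum_congr rfl fun k hk => by rw [hinner k hk], Finset.sum_eq_single k0]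
    · rw [if_pos ((hdvdiff k0 hk0q).mpr rfl), mul_neg_one]
    · intro k hk hne
      rw [if_neg, mul_zero]
      exact fun hd => hne ((hdvdiff k (Finset.mem_range.mp hk)).mp hd)
    · exact fun h => absurd (Finset.mem_range.mpr hk0q) h
  have hzero : ((q - 1).choose k0 : F) * a ^ k0 = 0 := by
    have := hsum0
    rw [hswap, hfinal] at this
    exact neg_eq_zero.mp this
  have hchoose : ((q - 1).choose k0 : F) = (-1) ^ k0 := by
    rw [← hpe]
    exact aux_choose p e hpp F k0 (by omega)
  rw [hchoose] at hzero
  exact (mul_ne_zero (by simp [pow_ne_zero]) (pow_ne_zero _ ha)) hzero
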